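/- Let β ≥ 1 be an integer and let j be an integer with 0 ≤ j ≤ β. Then for every real x ≠ 0, Q_{β,j}(1/x) = 2^{j} x^{j−β} Y_{β−1}^{(j)}(x), where Y_{β−1}^{(j)} denotes the j-th derivative of the Bessel polynomial Y_{β−1} and x^{j−β} is the (possibly negative) integer power of x. -/

import Mathlib

open Finset

/-- The `m`-th Bessel polynomial `Y_m(x) = Σ_{k=0}^{m} (m+k)!/(k!(m-k)!) (x/2)^k`,
as a function on `ℝ`. -/
noncomputable def besselY (m : ℕ) (x : ℝ) : ℝ :=
  ∑ k ∈ Finset.range (m + 1),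
    (Nat.factorial (m + k) : ℝ) / (Nat.factorial k * Nat.factorial (m - k)) * (x / 2) ^ k

/-- `Q_{β,j}(x) = Σ_{k=0}^{β-j-1} (β+j+k-1)!/(k!(β-j-k-1)!) 2^{-k} x^{β-j-k}`
(the empty sum when `j ≥ β`), as a function on `ℝ`. -/
noncomputable def Qbeta (β j : ℕ) (x : ℝ) : ℝ :=
  ∑ k ∈ Finset.range (β - j),
    (Nat.factorial (β + j + k - 1) : ℝ) /
      (Nat.factorial k * Nat.factorial (β - j - k - 1)) * (1 / 2) ^ k * x ^ (β - j - k)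

lemma besselY_iteratedDeriv (m j : ℕ) :
    iteratedDeriv j (besselY m) = fun x : ℝ =>
      ∑ k ∈ Finset.range (m + 1 - j),
        (Nat.factorial (m + j + k) : ℝ) / (Nat.factorial k * Nat.factorial (m - j - k)) *
          (1 / 2 : ℝ) ^ (j + k) * x ^ k := by
  induction j with
  | zero =>
    funext x
    simp only [iteratedDeriv_zero, besselY, Nat.sub_zero, Nat.add_zero, Nat.zero_add]
    refine Finset.sum_congr rfl fun k _ => ?_
    rw [div_pow, div_pow, one_pow]
    ring
  | succ j ih =>
    rw [iteratedDeriv_succ, ih]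
    funext x
    rw [deriv_fun_sum (fun k _ => ((differentiable_pow k).const_mul _).differentiableAt)]
    rcases Nat.eq_zero_or_pos (m + 1 - j) with h0 | h0
    · have h1 : m + 1 - (j + 1) = 0 := by omega
      rw [h0, h1]; simp
    · obtain ⟨N, hN⟩ : ∃ N, m + 1 - j = N + 1 := ⟨m - j, by omega⟩
      have hN' : m + 1 - (j + 1) = N := by omega
      rw [hN, hN', Finset.sum_range_succ']
      simp only [deriv_const_mul_field, deriv_pow_field]
      rw [show ((0:ℕ):ℝ) * x ^ (0 - 1) = 0 by norm_num, mul_zero, add_zero]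
      refine Finset.sum_congr rfl fun k _ => ?_
      have hfac : (Nat.factorial (k + 1) : ℝ) = (k + 1) * Nat.factorial k := by
        exact_mod_cast Nat.factorial_succ k
      have e1 : m + j + (k + 1) = m + (j + 1) + k := by omega
      have e2 : m - j - (k + 1) = m - (j + 1) - k := by omega
      rw [e1, e2, hfac, Nat.add_sub_cancel, pow_add, pow_add, pow_add]
      have hk0 : (Nat.factorial k : ℝ) ≠ 0 := Nat.cast_ne_zero.2 (Nat.factorial_ne_zero k)
      have hk1 : ((k : ℝ) + 1) ≠ 0 := by positivity
      have hm0 : (Nat.factorial (m - (j + 1) - k) : ℝ) ≠ 0 :=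
        Nat.cast_ne_zero.2 (Nat.factorial_ne_zero _)
      push_cast
      field_simp
      ring

/-- for integers `1 ≤ β` and `0 ≤ j ≤ β` and real `x ≠ 0`,
`Q_{β,j}(1/x) = 2^j x^{j-β} Y_{β-1}^{(j)}(x)`, where `Y_{β-1}^{(j)}` is the `j`-th
derivative of the Bessel polynomial `Y_{β-1}`. -/
theorem statement6 (β j : ℕ) (hβ : 1 ≤ β) (hj : j ≤ β) (x : ℝ) (hx : x ≠ 0) :
    Qbeta β j (1 / x) =
      2 ^ j * x ^ ((j : ℤ) - (β : ℤ)) * iteratedDeriv j (besselY (β - 1)) x := by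
  rw [besselY_iteratedDeriv]
  have hm : β - 1 + 1 - j = β - j := by omega
  rw [Qbeta, hm, Finset.mul_sum]
  refine Finset.sum_congr rfl fun k hk => ?_
  rw [Finset.mem_range] at hk
  have e1 : β - 1 + j + k = β + j + k - 1 := by omega
  have e2 : β - 1 - j - k = β - j - k - 1 := by omega
  rw [e1, e2]
  have hz : x ^ ((j : ℤ) - β) = (x ^ (β - j - k) : ℝ)⁻¹ * (x ^ k)⁻¹ := by
    rw [← zpow_natCast x (β - j - k), ← zpow_natCast x k, ← zpow_neg, ← zpow_neg,
      ← zpow_add₀ hx]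
    congr 1
    have : ((β - j - k : ℕ) : ℤ) = (β : ℤ) - j - k := by
      push_cast [Nat.cast_sub (by omega : k ≤ β - j), Nat.cast_sub hj]; ring
    omega
  rw [one_div x, inv_pow, hz, pow_add]
  have hxk : (x : ℝ) ^ k ≠ 0 := pow_ne_zero _ hx
  have hxn : (x : ℝ) ^ (β - j - k) ≠ 0 := pow_ne_zero _ hx
  field_simp
  ring_nf
  rw [← mul_pow]; norm_num
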